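/- For every n ≥ 0, the map B restricted to packed words of length n is a surjection onto the set of binary trees with multiplicities of size n; consequently, the sum of f(T) over all binary trees with multiplicities T of size n equals the total number of packed words of length n. -/

import Mathlib

open scoped Classical

/-- Words over the positive integers. -/
abbrev Word : Type := List ℕ+

/-- Evaluation of a word: number of occurrences of each letter. -/
def ev (w : Word) : ℕ+ → ℕ := fun a => w.count a

/-- A monoid congruence on the free monoid `(ℕ⁺)*`. -/
def IsCongruence (r : Word → Word → Prop) : Prop :=
  Equivalence r ∧ ∀ u v u' v', r u v → r u' v' → r (u ++ u') (v ++ v')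

/-- Restriction of a word to the letters belonging to a set `I`. -/
noncomputable def restrictTo (I : Set ℕ+) (w : Word) : Word :=
  w.filter fun a => decide (a ∈ I)

/-- `I` is an interval (order-convex subset) of `ℕ⁺`. -/
def IsIntervalSet (I : Set ℕ+) : Prop :=
  ∀ ⦃a b c : ℕ+⦄, a ∈ I → c ∈ I → a ≤ b → b ≤ c → b ∈ I

/-- Compatibility with restriction to alphabet intervals. -/
def CompatRestrict (r : Word → Word → Prop) : Prop :=
  ∀ I : Set ℕ+, IsIntervalSet I → ∀ u v, r u v → r (restrictTo I u) (restrictTo I v)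

/-- `r` is a `φ`-congruence. -/
def IsPhiCongruence (φ : Word → Word) (r : Word → Word → Prop) : Prop :=
  ∀ u v, r u v ↔ (r (φ u) (φ v) ∧ ev u = ev v)

/-- Standardization. -/
def std (w : Word) : Word :=
  (List.range w.length).map fun i =>
    ⟨((List.range w.length).countP fun j =>
        decide (w.getD j 1 < w.getD i 1 ∨ (w.getD j 1 = w.getD i 1 ∧ j < i))) + 1,
      Nat.succ_pos _⟩

/-- Packing. -/
def pack (w : Word) : Word :=
  w.map fun a => ⟨(w.dedup.countP fun b => decide (b < a)) + 1, Nat.succ_pos _⟩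

theorem parkBad_ex (w : Word) :
    ∃ d : ℕ, 1 ≤ d ∧ (w.countP fun a : ℕ+ => decide ((a : ℕ) ≤ d)) < d :=
  ⟨w.length + 1, Nat.succ_le_succ (Nat.zero_le _), by
    have h := List.countP_le_length (p := fun a : ℕ+ => decide ((a : ℕ) ≤ w.length + 1)) (l := w)
    omega⟩

/-- The smallest `d ≥ 1` such that fewer than `d` letters of `w` are `≤ d`. -/
noncomputable def parkBad (w : Word) : ℕ := Nat.find (parkBad_ex w)

/-- One pass of the parkization procedure, with fuel. -/
noncomputable def parkAux : ℕ → Word → Word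
  | 0, w => w
  | f + 1, w =>
    if parkBad w ≤ w.length then
      parkAux f (w.map fun a : ℕ+ => if parkBad w < (a : ℕ) then (a - 1 : ℕ+) else a)
    else w

/-- Parkization. The fuel `(sum of the letters)` always suffices,
since every pass strictly decreases the sum of the letters. -/
noncomputable def park (w : Word) : Word := parkAux (w.map fun a => (a : ℕ)).sum w

/-- Smallest monoid congruence containing `base`. -/
def CongClosure (base : Word → Word → Prop) (u v : Word) : Prop :=
  ∀ r : Word → Word → Prop, IsCongruence r → (∀ x y, base x y → r x y) → r u v

def sylvBase (x y : Word) : Prop :=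
  ∃ (a b c : ℕ+) (v : Word), a ≤ b ∧ b < c ∧
    x = a :: c :: (v ++ [b]) ∧ y = c :: a :: (v ++ [b])

/-- The sylvester congruence. -/
def sylv : Word → Word → Prop := CongClosure sylvBase

def stalBase (x y : Word) : Prop :=
  ∃ (a b : ℕ+) (v : Word), x = b :: a :: (v ++ [b]) ∧ y = a :: b :: (v ++ [b])

/-- The stalactic congruence. -/
def stal : Word → Word → Prop := CongClosure stalBase

def sylvSharpBase (x y : Word) : Prop :=
  ∃ (a b c : ℕ+) (v : Word), a < b ∧ b ≤ c ∧
    x = b :: (v ++ [a, c]) ∧ y = b :: (v ++ [c, a])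

/-- The #-sylvester congruence. -/
def sylvSharp : Word → Word → Prop := CongClosure sylvSharpBase

/-- The taïga congruence: join of the sylvester and stalactic congruences. -/
def taiga : Word → Word → Prop := CongClosure fun u v => sylv u v ∨ stal u v

/-- Planar binary trees with letter labels. -/
inductive BT : Type where
  | leaf : BT
  | node : BT → ℕ+ → BT → BT
deriving DecidableEq

/-- Binary search tree insertion of a letter. -/
def BT.insert : BT → ℕ+ → BT
  | .leaf, l => .node .leaf l .leaf
  | .node L b R, l => if l ≤ b then .node (L.insert l) b R else .node L b (R.insert l)

/-- Binary search tree of a word: insert the letters from right to left. -/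
def bst (w : Word) : BT := w.foldr (fun l t => t.insert l) .leaf

/-- Planar binary trees labelled by a letter and a multiplicity. -/
inductive BSTM : Type where
  | leaf : BSTM
  | node : BSTM → ℕ+ → ℕ+ → BSTM → BSTM   -- left, letter, multiplicity, right
deriving DecidableEq

/-- Insertion of a letter into a binary search tree with multiplicities. -/
def BSTM.insert : BSTM → ℕ+ → BSTM
  | .leaf, l => .node .leaf l 1 .leaf
  | .node L l' k R, l =>
    if l = l' then .node L l' (k + 1) R
    else if l < l' then .node (L.insert l) l' k R
    else .node L l' k (R.insert l)

/-- The `P`-symbol: insert the letters of `w` from right to left. -/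
def Pmap (w : Word) : BSTM := w.foldr (fun l t => t.insert l) .leaf

/-- Letters of a BSTM in left-to-right (infix) order. -/
def BSTM.letters : BSTM → List ℕ+
  | .leaf => []
  | .node L l _ R => L.letters ++ l :: R.letters

/-- The binary search tree property for a BSTM. -/
def BSTM.IsSearchTree : BSTM → Prop
  | .leaf => True
  | .node L l _ R =>
      (∀ x ∈ L.letters, x < l) ∧ (∀ x ∈ R.letters, l < x) ∧
        L.IsSearchTree ∧ R.IsSearchTree

/-- Total multiplicity of a letter in a BSTM. -/
def BSTM.mult : BSTM → ℕ+ → ℕ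
  | .leaf, _ => 0
  | .node L l k R, a => L.mult a + (if a = l then (k : ℕ) else 0) + R.mult a

/-- Size of a BSTM: sum of the multiplicities. -/
def BSTM.size : BSTM → ℕ
  | .leaf => 0
  | .node L _ k R => L.size + (k : ℕ) + R.size

/-- Planar binary trees with multiplicities. -/
inductive BTM : Type where
  | leaf : BTM
  | node : BTM → ℕ+ → BTM → BTM
deriving DecidableEq

/-- Size of a BTM: sum of the multiplicities. -/
def BTM.size : BTM → ℕ
  | .leaf => 0
  | .node L k R => L.size + (k : ℕ) + R.size

/-- Number of nodes of a BTM. -/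
def BTM.numNodes : BTM → ℕ
  | .leaf => 0
  | .node L _ R => L.numNodes + 1 + R.numNodes

/-- Forgetting the letters of a BSTM gives a BTM. -/
def forgetLetters : BSTM → BTM
  | .leaf => .leaf
  | .node L _ k R => .node (forgetLetters L) k (forgetLetters R)

/-- The `B`-symbol: the BTM underlying `P(w)`. -/
def Bmap (w : Word) : BTM := forgetLetters (Pmap w)

/-- A packed word: its set of letters is `{1, …, k}` for some `k`. -/
def IsPacked (w : Word) : Prop := ∀ a ∈ w, ∀ b : ℕ+, b ≤ a → b ∈ w

/-- Number of packed words inserting to the BTM `T`. -/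
noncomputable def fT (T : BTM) : ℕ :=
  Set.ncard {w : Word | IsPacked w ∧ Bmap w = T}

/-- The hook-type product over the subtrees of a BTM. -/
def hookProd : BTM → ℕ
  | .leaf => 1
  | .node L k R =>
      (BTM.node L k R).size * ((k : ℕ) - 1).factorial * hookProd L * hookProd R

/-- Label the nodes of a BTM in infix order starting from a given letter;
returns the labelled tree and the next unused letter. -/
def infixLabelAux : BTM → ℕ+ → BSTM × ℕ+
  | .leaf, n => (.leaf, n)
  | .node L k R, n =>
    let p := infixLabelAux L n
    let q := infixLabelAux R (p.2 + 1)
    (.node p.1 p.2 k q.1, q.2)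

/-- Label the nodes of a BTM by `1, …, k` in infix order. -/
def infixLabel (T : BTM) : BSTM := (infixLabelAux T 1).1

section Aux

/-! ### Size lemmas -/

lemma BSTM.size_insert (t : BSTM) (l : ℕ+) : (t.insert l).size = t.size + 1 := by
  induction t with
  | leaf => simp [BSTM.insert, BSTM.size]
  | node L l' k R ihL ihR =>
    unfold BSTM.insert
    split_ifs with h1 h2 <;> simp [BSTM.size, ihL, ihR] <;> push_cast <;> omega

lemma Pmap_cons (a : ℕ+) (w : Word) : Pmap (a :: w) = (Pmap w).insert a := rfl

lemma size_Pmap (w : Word) : (Pmap w).size = w.length := by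
  induction w with
  | nil => rfl
  | cons a w ih => rw [Pmap_cons, BSTM.size_insert, ih, List.length_cons]

lemma size_forget (S : BSTM) : (forgetLetters S).size = S.size := by
  induction S with
  | leaf => rfl
  | node L l k R ihL ihR => simp [forgetLetters, BTM.size, BSTM.size, ihL, ihR]

lemma size_Bmap (w : Word) : (Bmap w).size = w.length := by
  rw [Bmap, size_forget, size_Pmap]

/-! ### Insertion lemmas -/

lemma BSTM.insert_lt {a l : ℕ+} (h : a < l) (L R : BSTM) (k : ℕ+) :
    (BSTM.node L l k R).insert a = .node (L.insert a) l k R := by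
  simp [BSTM.insert, h, ne_of_lt h]

lemma BSTM.insert_gt {a l : ℕ+} (h : l < a) (L R : BSTM) (k : ℕ+) :
    (BSTM.node L l k R).insert a = .node L l k (R.insert a) := by
  simp [BSTM.insert, (ne_of_lt h).symm, not_lt_of_gt h]

lemma foldr_insert_lt (u : Word) {l : ℕ+} (k : ℕ+) (T R : BSTM)
    (h : ∀ a ∈ u, a < l) :
    u.foldr (fun x t => t.insert x) (BSTM.node T l k R) =
      .node (u.foldr (fun x t => t.insert x) T) l k R := by
  induction u with
  | nil => rfl
  | cons a u ih =>
    simp only [List.foldr_cons]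
    rw [ih (fun x hx => h x (List.mem_cons_of_mem _ hx)),
      BSTM.insert_lt (h a List.mem_cons_self)]

lemma foldr_insert_gt (u : Word) {l : ℕ+} (k : ℕ+) (T L : BSTM)
    (h : ∀ a ∈ u, l < a) :
    u.foldr (fun x t => t.insert x) (BSTM.node L l k T) =
      .node L l k (u.foldr (fun x t => t.insert x) T) := by
  induction u with
  | nil => rfl
  | cons a u ih =>
    simp only [List.foldr_cons]
    rw [ih (fun x hx => h x (List.mem_cons_of_mem _ hx)),
      BSTM.insert_gt (h a List.mem_cons_self)]

lemma Pmap_replicate (m : ℕ) (l : ℕ+) :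
    Pmap (List.replicate (m + 1) l) = .node .leaf l ⟨m + 1, Nat.succ_pos m⟩ .leaf := by
  induction m with
  | zero => rfl
  | succ m ih =>
    rw [List.replicate_succ, Pmap_cons, ih]
    show (BSTM.node BSTM.leaf l ⟨m + 1, _⟩ BSTM.leaf).insert l = _
    simp only [BSTM.insert, if_pos rfl]
    congr 1
    all_goals exact PNat.coe_injective (by simp [PNat.add_coe])

lemma Pmap_replicate' (k : ℕ+) (l : ℕ+) :
    Pmap (List.replicate (k : ℕ) l) = .node .leaf l k .leaf := by
  have h : (k : ℕ) = ((k : ℕ) - 1) + 1 := (Nat.succ_pred_eq_of_pos k.pos).symm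
  rw [h, Pmap_replicate]
  congr 1
  exact PNat.coe_injective (Nat.succ_pred_eq_of_pos k.pos)

/-! ### The word of a BSTM -/

def wordOf : BSTM → Word
  | .leaf => []
  | .node L l k R => wordOf L ++ wordOf R ++ List.replicate (k : ℕ) l

lemma mem_wordOf (S : BSTM) (a : ℕ+) : a ∈ wordOf S ↔ a ∈ S.letters := by
  induction S with
  | leaf => simp [wordOf, BSTM.letters]
  | node L l k R ihL ihR =>
    simp only [wordOf, BSTM.letters, List.mem_append, List.mem_cons, List.mem_replicate,
      ihL, ihR]
    have : (k : ℕ) ≠ 0 := k.pos.ne'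
    tauto

lemma length_wordOf (S : BSTM) : (wordOf S).length = S.size := by
  induction S with
  | leaf => rfl
  | node L l k R ihL ihR =>
    simp [wordOf, BSTM.size, ihL, ihR]; omega

lemma Pmap_wordOf (S : BSTM) (h : S.IsSearchTree) : Pmap (wordOf S) = S := by
  induction S with
  | leaf => rfl
  | node L l k R ihL ihR =>
    obtain ⟨hL, hR, hLs, hRs⟩ := h
    show Pmap ((wordOf L ++ wordOf R) ++ List.replicate (k : ℕ) l) = _
    unfold Pmap
    rw [List.foldr_append, List.foldr_append]
    have h1 : (List.replicate (k : ℕ) l).foldr (fun x t => t.insert x) BSTM.leaf =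
        BSTM.node BSTM.leaf l k BSTM.leaf := Pmap_replicate' k l
    rw [h1]
    rw [foldr_insert_gt _ k _ _ (fun x hx => hR x ((mem_wordOf R x).mp hx))]
    have h2 : (wordOf R).foldr (fun x t => t.insert x) BSTM.leaf = R := ihR hRs
    rw [h2]
    rw [foldr_insert_lt _ k _ _ (fun x hx => hL x ((mem_wordOf L x).mp hx))]
    rw [show (wordOf L).foldr (fun x t => t.insert x) BSTM.leaf = L from ihL hLs]

/-! ### Infix labelling -/

lemma infixAux_spec (T : BTM) (m : ℕ+) :
    ((infixLabelAux T m).2 : ℕ) = (m : ℕ) + T.numNodes ∧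
    (∀ a : ℕ+, a ∈ (infixLabelAux T m).1.letters ↔
      ((m : ℕ) ≤ (a : ℕ) ∧ (a : ℕ) < ((infixLabelAux T m).2 : ℕ))) ∧
    (infixLabelAux T m).1.IsSearchTree ∧
    forgetLetters (infixLabelAux T m).1 = T := by
  induction T generalizing m with
  | leaf =>
    refine ⟨by simp [infixLabelAux, BTM.numNodes], fun a => ?_, trivial, rfl⟩
    simp [infixLabelAux, BSTM.letters] <;> omega
  | node L k R ihL ihR =>
    obtain ⟨hL1, hL2, hL3, hL4⟩ := ihL m
    obtain ⟨hR1, hR2, hR3, hR4⟩ := ihR ((infixLabelAux L m).2 + 1)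
    set p := infixLabelAux L m with hp
    set q := infixLabelAux R (p.2 + 1) with hq
    have hstep : infixLabelAux (BTM.node L k R) m = (.node p.1 p.2 k q.1, q.2) := rfl
    rw [hstep]
    have hq1' : (q.2 : ℕ) = (p.2 : ℕ) + 1 + R.numNodes := by
      rw [hR1]; push_cast; ring
    have hmem : ∀ a : ℕ+, a ∈ (BSTM.node p.1 p.2 k q.1).letters ↔
        ((m : ℕ) ≤ (a : ℕ) ∧ (a : ℕ) < (q.2 : ℕ)) := by
      intro a
      simp only [BSTM.letters, List.mem_append, List.mem_cons, hL2, hR2]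
      constructor
      · rintro (h | h | h)
        · push_cast at h ⊢; omega
        · subst h; push_cast; omega
        · push_cast at h ⊢; omega
      · intro h
        by_cases h1 : (a : ℕ) < (p.2 : ℕ)
        · exact Or.inl ⟨h.1, h1⟩
        · by_cases h2 : (a : ℕ) = (p.2 : ℕ)
          · exact Or.inr (Or.inl (PNat.coe_injective h2))
          · refine Or.inr (Or.inr ⟨?_, h.2⟩)
            push_cast; omega
    refine ⟨by simp only [hq1', hL1, BTM.numNodes]; ring, hmem, ?_, ?_⟩
    · refine ⟨fun x hx => ?_, fun x hx => ?_, hL3, hR3⟩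
      · have := (hL2 x).1 hx
        exact (PNat.coe_lt_coe _ _).mp this.2
      · have := (hR2 x).1 hx
        have : (p.2 : ℕ) < (x : ℕ) := by push_cast at this; omega
        exact (PNat.coe_lt_coe _ _).mp this
    · show BTM.node (forgetLetters p.1) k (forgetLetters q.1) = _
      rw [hL4, hR4]

lemma infixLabel_spec (T : BTM) :
    (∀ a : ℕ+, a ∈ (infixLabel T).letters ↔ (a : ℕ) ≤ T.numNodes) ∧
    (infixLabel T).IsSearchTree ∧ forgetLetters (infixLabel T) = T := by
  obtain ⟨h1, h2, h3, h4⟩ := infixAux_spec T 1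
  refine ⟨fun a => ?_, h3, h4⟩
  rw [infixLabel, h2 a, h1]
  have := a.pos
  push_cast
  omega

/-! ### Surjectivity -/

lemma surj_part (T : BTM) :
    ∃ w : Word, IsPacked w ∧ w.length = T.size ∧ Bmap w = T := by
  obtain ⟨h1, h2, h3⟩ := infixLabel_spec T
  refine ⟨wordOf (infixLabel T), ?_, ?_, ?_⟩
  · intro a ha b hb
    rw [mem_wordOf] at ha ⊢
    rw [h1] at ha ⊢
    exact le_trans ((PNat.coe_le_coe _ _).mpr hb) ha
  · rw [length_wordOf, ← size_forget, h3]
  · rw [Bmap, Pmap_wordOf _ h2, h3]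

/-! ### Finiteness of packed words of length n -/

lemma packed_letter_le {w : Word} (hp : IsPacked w) {a : ℕ+} (ha : a ∈ w) :
    (a : ℕ) ≤ w.length := by
  have hsub : Finset.Icc (1 : ℕ+) a ⊆ w.toFinset := by
    intro b hb
    rw [List.mem_toFinset]
    exact hp a ha b (Finset.mem_Icc.mp hb).2
  have hcard := Finset.card_le_card hsub
  rw [PNat.card_Icc] at hcard
  have := w.toFinset_card_le
  have := a.pos
  simp only [PNat.one_coe] at hcard
  omega

lemma packed_finite (n : ℕ) : {w : Word | IsPacked w ∧ w.length = n}.Finite := by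
  have hfin : {l : List (Fin (n + 1)) | l.length = n}.Finite := List.finite_length_eq _ n
  have himg := hfin.image (fun l : List (Fin (n + 1)) =>
    l.map (fun i : Fin (n + 1) => (⟨i.val + 1, Nat.succ_pos _⟩ : ℕ+)))
  refine himg.subset ?_
  rintro (w : Word) ⟨hp, hl⟩
  refine ⟨w.map (fun a : ℕ+ => (⟨((a : ℕ) - 1) % (n + 1), Nat.mod_lt _ (Nat.succ_pos n)⟩ :
    Fin (n + 1))), by simp [hl], ?_⟩
  simp only [List.map_map]
  conv_rhs => rw [← List.map_id w]
  refine List.map_congr_left fun a ha => ?_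
  have h1 := packed_letter_le hp ha
  have h2 := a.pos
  apply PNat.coe_injective
  simp only [Function.comp_apply, id_eq]
  show ((a : ℕ) - 1) % (n + 1) + 1 = (a : ℕ)
  rw [Nat.mod_eq_of_lt (by omega)]
  omega

end Aux

theorem Bmap_surjective_and_sum (n : ℕ) :
    (∀ w : Word, IsPacked w → w.length = n → (Bmap w).size = n) ∧
    (∀ T : BTM, T.size = n → ∃ w : Word, IsPacked w ∧ w.length = n ∧ Bmap w = T) ∧
    (∑ᶠ T ∈ {T : BTM | T.size = n}, fT T) =
      Set.ncard {w : Word | IsPacked w ∧ w.length = n} := by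
  refine ⟨fun w _ hl => by rw [size_Bmap, hl], fun T hT => ?_, ?_⟩
  · obtain ⟨w, h1, h2, h3⟩ := surj_part T
    exact ⟨w, h1, by rw [h2, hT], h3⟩
  · have hW := packed_finite n
    set F := hW.toFinset with hF
    set G := F.image Bmap with hG
    have hFmem : ∀ w : Word, w ∈ F ↔ (IsPacked w ∧ w.length = n) := by
      intro w; rw [hF, Set.Finite.mem_toFinset]; rfl
    have hGsize : ∀ T ∈ G, T.size = n := by
      intro T hT
      obtain ⟨w, hw, rfl⟩ := Finset.mem_image.mp hT
      rw [size_Bmap, ((hFmem w).mp hw).2]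
    have hsupp : {T : BTM | T.size = n} ∩ Function.support fT =
        ↑G ∩ Function.support fT := by
      ext T
      constructor
      · rintro ⟨hT, hfT⟩
        obtain ⟨w, hw1, hw2⟩ := Set.nonempty_of_ncard_ne_zero hfT
        have hwlen : w.length = n := by rw [← size_Bmap w, hw2]; exact hT
        exact ⟨Finset.mem_coe.mpr (Finset.mem_image.mpr
          ⟨w, (hFmem w).mpr ⟨hw1, hwlen⟩, hw2⟩), hfT⟩
      · rintro ⟨hTG, hfT⟩
        exact ⟨hGsize T (Finset.mem_coe.mp hTG), hfT⟩
    rw [finsum_mem_eq_sum_of_inter_support_eq fT hsupp]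
    have hfib : ∀ T ∈ G, fT T = (F.filter (fun w => Bmap w = T)).card := by
      intro T hT
      have hset : {w : Word | IsPacked w ∧ Bmap w = T} =
          ↑(F.filter (fun w => Bmap w = T)) := by
        ext w
        simp only [Set.mem_setOf_eq, Finset.coe_filter, Set.mem_setOf_eq, hFmem]
        constructor
        · rintro ⟨h1, h2⟩
          exact ⟨⟨h1, by rw [← size_Bmap w, h2, hGsize T hT]⟩, h2⟩
        · rintro ⟨⟨h1, _⟩, h2⟩; exact ⟨h1, h2⟩
      rw [fT, hset, Set.ncard_coe_finset]
    rw [Finset.sum_congr rfl hfib]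
    rw [← Finset.card_eq_sum_card_fiberwise (fun w hw => Finset.mem_image_of_mem Bmap hw)]
    rw [hF, ← Set.ncard_eq_toFinset_card _ hW]
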